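/- Let Σ be a finite set with |Σ| = n ≥ 1, E a finite set, C : E → P(Σ) with each C(e) nonempty and C(e) ≠ Σ unless specified, and ω : E → ℝ. Define the cophenetic game CV : P(Σ) → ℝ by CV(∅) = 0 and CV(X) = Σ_{e : X ⊆ C(e)} ω(e) for X ≠ ∅. Then for every a ∈ Σ, the Shapley value of CV on a equals (1/n)·Σ_{e} ω(e) − Σ_{e : a ∉ C(e)} ω(e)/(n − |C(e)|). -/

import Mathlib

open Finset

lemma term_eq {n m k : ℕ} (hk : k < m) (hm : m < n) :
    (m.choose k * k.factorial * (n - 1 - k).factorial : ℝ) =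
      (m.factorial * (n - k).factorial : ℝ) / ((m - k).factorial * ((n - m : ℕ) : ℝ)) -
      (m.factorial * (n - (k+1)).factorial : ℝ) /
        ((m - (k+1)).factorial * ((n - m : ℕ) : ℝ)) := by
  obtain ⟨d, rfl⟩ : ∃ d, m = k + d + 1 := ⟨m - k - 1, by omega⟩
  obtain ⟨s, rfl⟩ : ∃ s, n = k + d + s + 2 := ⟨n - (k + d + 1) - 1, by omega⟩
  have h1 : k + d + s + 2 - 1 - k = d + s + 1 := by omega
  have h2 : k + d + s + 2 - k = d + s + 2 := by omega
  have h3 : k + d + 1 - k = d + 1 := by omega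
  have h4 : k + d + s + 2 - (k + 1) = d + s + 1 := by omega
  have h5 : k + d + 1 - (k + 1) = d := by omega
  have h6 : k + d + s + 2 - (k + d + 1) = s + 1 := by omega
  rw [h1, h2, h3, h4, h5, h6]
  have hch : ((k + d + 1).choose k * k.factorial * (d + 1).factorial : ℕ)
      = (k + d + 1).factorial := by
    have := Nat.choose_mul_factorial_mul_factorial (n := k + d + 1) (k := k) (by omega)
    rwa [h3] at this
  have hchR : ((k + d + 1).choose k : ℝ) * k.factorial * (d + 1).factorial
      = (k + d + 1).factorial := by exact_mod_cast congrArg (Nat.cast : ℕ → ℝ) hch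
  have hf1 : ((d + s + 2).factorial : ℝ) = (d + s + 2) * (d + s + 1).factorial := by
    rw [Nat.factorial_succ]; push_cast; ring
  have hf2 : ((d + 1).factorial : ℝ) = (d + 1) * d.factorial := by
    rw [Nat.factorial_succ]; push_cast; ring
  have p1 : ((d + 1).factorial : ℝ) ≠ 0 := by positivity
  have p2 : (d.factorial : ℝ) ≠ 0 := by positivity
  have p3 : ((s : ℝ) + 1) ≠ 0 := by positivity
  rw [hf1, hf2, ← hchR, hf2]
  field_simp
  push_cast
  ring

lemma key_sum {n m : ℕ} (hm : m < n) :
    ∑ k ∈ range (m + 1), (m.choose k * k.factorial * (n - 1 - k).factorial : ℝ)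
      = (n.factorial : ℝ) / ((n - m : ℕ) : ℝ) := by
  set u : ℕ → ℝ := fun k =>
    (m.factorial * (n - k).factorial : ℝ) / ((m - k).factorial * ((n - m : ℕ) : ℝ)) with hu
  have hnm : (0 : ℝ) < ((n - m : ℕ) : ℝ) := by
    have : 0 < n - m := by omega
    exact_mod_cast this
  rw [sum_range_succ]
  have h1 : ∑ k ∈ range m, (m.choose k * k.factorial * (n - 1 - k).factorial : ℝ)
      = ∑ k ∈ range m, (u k - u (k + 1)) := by
    refine sum_congr rfl fun k hk => ?_
    exact term_eq (mem_range.mp hk) hm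
  rw [h1, Finset.sum_range_sub']
  have hu0 : u 0 = (n.factorial : ℝ) / ((n - m : ℕ) : ℝ) := by
    simp only [hu, Nat.sub_zero]
    have hmf : (m.factorial : ℝ) ≠ 0 := by positivity
    field_simp
  have hum : u m = (m.factorial : ℝ) * ((n - 1 - m).factorial : ℝ) := by
    simp only [hu, Nat.sub_self, Nat.factorial_zero, Nat.cast_one, one_mul]
    have h2 : n - m = (n - 1 - m) + 1 := by omega
    rw [h2, Nat.factorial_succ]
    have : ((n - 1 - m : ℕ) : ℝ) + 1 ≠ 0 := by positivity
    push_cast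
    field_simp
  have hlast : (m.choose m * m.factorial * (n - 1 - m).factorial : ℝ)
      = m.factorial * (n - 1 - m).factorial := by
    rw [Nat.choose_self]; push_cast; ring
  rw [hu0, hum, hlast]; ring

theorem stmt_4 {α E : Type*} [Fintype α] [DecidableEq α] [Fintype E]
    (hn : 1 ≤ Fintype.card α)
    (C : E → Finset α) (hC : ∀ e, (C e).Nonempty) (ω : E → ℝ)
    (CV : Finset α → ℝ) (hCV0 : CV ∅ = 0)
    (hCV : ∀ X : Finset α, X ≠ ∅ → CV X = ∑ e ∈ univ.filter (fun e => X ⊆ C e), ω e)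
    (a : α) :
    ∑ X ∈ univ.powerset.filter (fun X => a ∈ X),
      (((X.card - 1).factorial * (Fintype.card α - X.card).factorial : ℝ) /
        (Fintype.card α).factorial) * (CV X - CV (X.erase a)) =
    (1 / (Fintype.card α : ℝ)) * ∑ e, ω e -
      ∑ e ∈ univ.filter (fun e => a ∉ C e),
        ω e / ((Fintype.card α - (C e).card : ℕ) : ℝ) := by
  classical
  set n := Fintype.card α with hn'
  set w : ℕ → ℝ := fun c =>
    ((c - 1).factorial * (n - c).factorial : ℝ) / n.factorial with hw
  set S := univ.powerset.filter (fun X : Finset α => a ∈ X) with hS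
  have hwX : ∀ X : Finset α,
      (((X.card - 1).factorial * (n - X.card).factorial : ℝ) / n.factorial)
        = w X.card := fun X => rfl
  -- Step 1 : rewrite the marginal contribution
  have step1 : ∀ X ∈ S, CV X - CV (X.erase a) =
      (if X = {a} then (∑ e, ω e) else 0) -
        ∑ e ∈ univ.filter (fun e => a ∉ C e ∧ X.erase a ⊆ C e), ω e := by
    intro X hX
    rw [hS, mem_filter] at hX
    obtain ⟨-, haX⟩ := hX
    by_cases hXa : X = {a}
    · subst hXa
      rw [if_pos rfl, Finset.erase_singleton, hCV0, hCV {a} (by simp)]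
      have h1 : (univ.filter fun e => ({a} : Finset α) ⊆ C e)
          = univ.filter (fun e => a ∈ C e) := by
        simp [Finset.singleton_subset_iff]
      have h2 : (univ.filter fun e => a ∉ C e ∧ (∅ : Finset α) ⊆ C e)
          = univ.filter (fun e => ¬ a ∈ C e) := by
        simp
      rw [h1, h2, sub_zero]
      have hsum := Finset.sum_filter_add_sum_filter_not univ (fun e => a ∈ C e) ω
      linarith
    · have hXne : X ≠ ∅ := by rintro rfl; simp at haX
      have herase : X.erase a ≠ ∅ := by
        rw [Ne, Finset.erase_eq_empty_iff]
        push_neg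
        exact ⟨Finset.nonempty_iff_ne_empty.mpr hXne, hXa⟩
      rw [hCV X hXne, hCV _ herase, if_neg hXa]
      have hsplit := Finset.sum_filter_add_sum_filter_not
        (univ.filter (fun e => X.erase a ⊆ C e)) (fun e => a ∈ C e) ω
      rw [Finset.filter_filter, Finset.filter_filter] at hsplit
      have heq1 : (univ.filter fun e => X.erase a ⊆ C e ∧ a ∈ C e)
          = univ.filter (fun e => X ⊆ C e) := by
        refine filter_congr fun e _ => ?_
        constructor
        · rintro ⟨h1, h2⟩ x hx
          by_cases hxa : x = a
          · exact hxa ▸ h2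
          · exact h1 (Finset.mem_erase.mpr ⟨hxa, hx⟩)
        · intro h
          exact ⟨fun x hx => h (Finset.mem_of_mem_erase hx), h haX⟩
      have heq2 : (univ.filter fun e => X.erase a ⊆ C e ∧ ¬ a ∈ C e)
          = univ.filter (fun e => a ∉ C e ∧ X.erase a ⊆ C e) := by
        refine filter_congr fun e _ => ?_
        tauto
      rw [heq1, heq2] at hsplit
      linarith
  simp only [hwX]
  rw [sum_congr rfl (fun X hX => by rw [step1 X hX] :
    ∀ X ∈ S, w X.card * (CV X - CV (X.erase a)) =
      w X.card * ((if X = {a} then (∑ e, ω e) else 0) -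
        ∑ e ∈ univ.filter (fun e => a ∉ C e ∧ X.erase a ⊆ C e), ω e))]
  simp only [mul_sub]
  rw [Finset.sum_sub_distrib]
  -- Part 1
  have part1 : ∑ X ∈ S, w X.card * (if X = {a} then (∑ e, ω e) else 0)
      = (1 / (n : ℝ)) * ∑ e, ω e := by
    simp only [mul_ite, mul_zero]
    rw [Finset.sum_ite_eq' S {a} (fun X => w X.card * ∑ e, ω e)]
    have hmem : ({a} : Finset α) ∈ S := by
      rw [hS, mem_filter]
      exact ⟨mem_powerset.mpr (subset_univ _), mem_singleton_self a⟩
    rw [if_pos hmem, Finset.card_singleton]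
    have hw1 : w 1 = 1 / (n : ℝ) := by
      rw [hw]
      simp only [Nat.sub_self, Nat.factorial_zero, Nat.factorial_one]
      have hfact : (n.factorial : ℝ) = n * (n - 1).factorial := by
        exact_mod_cast (Nat.mul_factorial_pred (by omega)).symm
      rw [hfact]
      have h1 : ((n - 1).factorial : ℝ) ≠ 0 := by positivity
      have h2 : (n : ℝ) ≠ 0 := by
        simp only [ne_eq, Nat.cast_eq_zero]; omega
      field_simp
      ring
    rw [hw1]
  -- Part 2
  have part2 : ∑ X ∈ S, w X.card *
        ∑ e ∈ univ.filter (fun e => a ∉ C e ∧ X.erase a ⊆ C e), ω e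
      = ∑ e ∈ univ.filter (fun e => a ∉ C e),
          ω e / ((n - (C e).card : ℕ) : ℝ) := by
    have swap : ∑ X ∈ S, w X.card *
          ∑ e ∈ univ.filter (fun e => a ∉ C e ∧ X.erase a ⊆ C e), ω e
        = ∑ e : E, ∑ X ∈ S,
            w X.card * (if a ∉ C e ∧ X.erase a ⊆ C e then ω e else 0) := by
      simp only [sum_filter, mul_sum]
      exact Finset.sum_comm
    rw [swap]
    conv_rhs => rw [sum_filter]
    refine sum_congr rfl fun e _ => ?_
    by_cases he : a ∈ C e
    · simp [he]
    · rw [if_pos he]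
      simp only [he, not_false_iff, true_and]
      simp only [mul_ite, mul_zero]
      rw [← Finset.sum_filter]
      rw [hS, Finset.filter_filter]
      have hm : (C e).card < n := by
        have hsub : C e ⊆ univ.erase a :=
          fun x hx => Finset.mem_erase.mpr ⟨fun h => he (h ▸ hx), mem_univ x⟩
        have h3 := Finset.card_le_card hsub
        rw [Finset.card_erase_of_mem (mem_univ a), Finset.card_univ] at h3
        omega
      have hbij : ∑ X ∈ univ.powerset.filter (fun X => a ∈ X ∧ X.erase a ⊆ C e),
            w X.card * ω e
          = ∑ Y ∈ (C e).powerset, w (Y.card + 1) * ω e := by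
        refine Finset.sum_nbij' (fun X => X.erase a) (fun Y => insert a Y)
          ?_ ?_ ?_ ?_ ?_
        · intro X hX
          rw [mem_filter] at hX
          exact mem_powerset.mpr hX.2.2
        · intro Y hY
          rw [mem_powerset] at hY
          have haY : a ∉ Y := fun h => he (hY h)
          rw [mem_filter]
          refine ⟨mem_powerset.mpr (subset_univ _), Finset.mem_insert_self a Y, ?_⟩
          rw [Finset.erase_insert haY]
          exact hY
        · intro X hX
          rw [mem_filter] at hX
          exact Finset.insert_erase hX.2.1
        · intro Y hY
          rw [mem_powerset] at hY
          exact Finset.erase_insert (fun h => he (hY h))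
        · intro X hX
          rw [mem_filter] at hX
          have hpos : 0 < X.card := Finset.card_pos.mpr ⟨a, hX.2.1⟩
          have hcard : (X.erase a).card + 1 = X.card := by
            rw [Finset.card_erase_of_mem hX.2.1]; omega
          rw [hcard]
      rw [hbij, ← Finset.sum_mul]
      have hps := Finset.sum_powerset_apply_card (fun c => w (c + 1)) (x := C e)
      rw [hps]
      have hsum : ∑ k ∈ range ((C e).card + 1), (C e).card.choose k • w (k + 1)
          = 1 / (((n - (C e).card : ℕ)) : ℝ) := by
        have hterm : ∀ k ∈ range ((C e).card + 1),
            (C e).card.choose k • w (k + 1)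
              = ((C e).card.choose k * k.factorial * (n - 1 - k).factorial : ℝ)
                  / n.factorial := by
          intro k _
          rw [nsmul_eq_mul, hw]
          simp only
          rw [Nat.add_sub_cancel, show n - (k + 1) = n - 1 - k from by omega]
          push_cast
          ring
        rw [sum_congr rfl hterm, ← Finset.sum_div, key_sum hm]
        have h1 : (n.factorial : ℝ) ≠ 0 := by positivity
        have h2 : ((n - (C e).card : ℕ) : ℝ) ≠ 0 := by
          simp only [ne_eq, Nat.cast_eq_zero]; omega
        field_simp
      rw [hsum, one_div, inv_mul_eq_div]
  rw [part1, part2]
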